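/- Let S = { x : Σ x_i A_i + A_0 ⪰ 0 } be a spectrahedron and write Q_x = A_0 + Σ x_i A_i. Then Q_l spans an extreme ray of the spectrahedral cone (A_0 = 0) if and only if Q_l has maximal kernel: whenever ker(Q_p) ⊇ ker(Q_l) for some p in the cone, Q_p is a scalar multiple of Q_l. -/

import Mathlib

open Matrix

-- smul of PSD by nonneg real
lemma psd_smul' {m : ℕ} {P : Matrix (Fin m) (Fin m) ℝ} (hP : P.PosSemidef)
    {c : ℝ} (hc : 0 ≤ c) : (c • P).PosSemidef := by
  refine .of_dotProduct_mulVec_nonneg ?_ fun x => ?_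
  · unfold Matrix.IsHermitian
    rw [conjTranspose_smul, hP.1]
    simp
  · rw [smul_mulVec, dotProduct_smul, smul_eq_mul]
    exact mul_nonneg hc (hP.dotProduct_mulVec_nonneg x)

lemma diag_sub_psd {m : ℕ} (d : Fin m → ℝ) (hd : ∀ i, 0 ≤ d i)
    (P : Matrix (Fin m) (Fin m) ℝ) (hP : P.PosSemidef)
    (hker : ∀ v : Fin m → ℝ, (diagonal d) *ᵥ v = 0 → P *ᵥ v = 0) :
    ∃ ε : ℝ, 0 < ε ∧ (diagonal d - ε • P).PosSemidef := by
  classical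
  have hcol : ∀ j, d j = 0 → ∀ i, P i j = 0 := by
    intro j hj i
    have h0 : (diagonal d) *ᵥ Pi.single j 1 = 0 := by
      rw [diagonal_mulVec_single, hj, zero_mul]
      simp
    have := congrFun (hker _ h0) i
    simpa using this
  have hrow : ∀ i, d i = 0 → ∀ j, P i j = 0 := by
    intro i hi j
    have h := hcol i hi j
    have hsym : P j i = P i j := by
      have := congrFun (congrFun hP.1 j) i
      simpa using this.symm
    rw [← hsym]
    exact h
  set supp : Finset (Fin m) := Finset.univ.filter (fun i => d i ≠ 0) with hsupp
  by_cases hne : supp.Nonempty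
  · set B : ℝ := ∑ i, ∑ j, |P i j| with hB
    have hB0 : 0 ≤ B := Finset.sum_nonneg fun i _ =>
      Finset.sum_nonneg fun j _ => abs_nonneg _
    set dmin : ℝ := supp.inf' hne d with hdmin
    have hdmin_pos : 0 < dmin := by
      rw [hdmin, Finset.lt_inf'_iff]
      intro i hi
      rw [hsupp, Finset.mem_filter] at hi
      exact lt_of_le_of_ne (hd i) (Ne.symm hi.2)
    set ε : ℝ := dmin / (B + 1) with hε
    have hεpos : 0 < ε := div_pos hdmin_pos (by linarith)
    have hεB : ε * B ≤ dmin := by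
      rw [hε, div_mul_eq_mul_div, div_le_iff₀ (by linarith)]
      nlinarith
    refine ⟨ε, hεpos, .of_dotProduct_mulVec_nonneg ?_ ?_⟩
    · unfold Matrix.IsHermitian
      rw [conjTranspose_sub, conjTranspose_smul, hP.1, (isHermitian_diagonal d)]
      simp
    · intro v
      have hstar : star v = v := by
        funext i; simp
      rw [hstar]
      set N : ℝ := ∑ i ∈ supp, v i ^ 2 with hN
      have hN0 : 0 ≤ N := Finset.sum_nonneg fun i _ => sq_nonneg _
      have hvN : ∀ i ∈ supp, v i ^ 2 ≤ N :=
        fun i hi => Finset.single_le_sum (fun j _ => sq_nonneg (v j)) hi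
      -- diagonal part
      have hDv : dmin * N ≤ v ⬝ᵥ (diagonal d *ᵥ v) := by
        have : v ⬝ᵥ (diagonal d *ᵥ v) = ∑ i, v i * (d i * v i) := by
          simp [dotProduct, mulVec_diagonal]
        rw [this]
        calc dmin * N = ∑ i ∈ supp, dmin * v i ^ 2 := by rw [Finset.mul_sum]
          _ ≤ ∑ i ∈ supp, v i * (d i * v i) := by
              refine Finset.sum_le_sum fun i hi => ?_
              have h1 : dmin ≤ d i := Finset.inf'_le d hi
              nlinarith [sq_nonneg (v i)]
          _ ≤ ∑ i, v i * (d i * v i) := by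
              refine Finset.sum_le_sum_of_subset_of_nonneg (Finset.filter_subset _ _)
                (fun i _ _ => ?_)
              nlinarith [hd i, sq_nonneg (v i)]
      -- P part
      have hPv : v ⬝ᵥ (P *ᵥ v) ≤ B * N := by
        have hexp : v ⬝ᵥ (P *ᵥ v) = ∑ i, ∑ j, v i * (P i j * v j) := by
          simp [dotProduct, mulVec, Finset.mul_sum]
        rw [hexp, hB, Finset.sum_mul]
        refine Finset.sum_le_sum fun i _ => ?_
        rw [Finset.sum_mul]
        refine Finset.sum_le_sum fun j _ => ?_
        by_cases hdi : d i = 0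
        · rw [hrow i hdi j]
          simp [hN0]
        by_cases hdj : d j = 0
        · rw [hcol j hdj i]
          simp [hN0]
        have hiN : v i ^ 2 ≤ N := hvN i (by simp [hsupp, hdi])
        have hjN : v j ^ 2 ≤ N := hvN j (by simp [hsupp, hdj])
        have habs : |v i * v j| ≤ N := by
          rw [abs_le]
          constructor <;> nlinarith [sq_nonneg (v i - v j), sq_nonneg (v i + v j)]
        calc v i * (P i j * v j) = P i j * (v i * v j) := by ring
          _ ≤ |P i j * (v i * v j)| := le_abs_self _
          _ = |P i j| * |v i * v j| := abs_mul _ _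
          _ ≤ |P i j| * N := mul_le_mul_of_nonneg_left habs (abs_nonneg _)
      have key : ε * (v ⬝ᵥ (P *ᵥ v)) ≤ dmin * N := by
        calc ε * (v ⬝ᵥ (P *ᵥ v)) ≤ ε * (B * N) :=
              mul_le_mul_of_nonneg_left hPv hεpos.le
          _ = (ε * B) * N := by ring
          _ ≤ dmin * N := mul_le_mul_of_nonneg_right hεB hN0
      rw [sub_mulVec, dotProduct_sub, smul_mulVec, dotProduct_smul, smul_eq_mul]
      linarith
  · -- supp empty : d = 0 and P = 0
    have hd0 : ∀ i, d i = 0 := by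
      intro i
      by_contra h
      exact hne ⟨i, by simp [hsupp, h]⟩
    have hP0 : P = 0 := by
      ext i j
      exact hcol j (hd0 j) i
    exact ⟨1, one_pos, by
      rw [hP0, smul_zero, sub_zero]
      exact Matrix.PosSemidef.diagonal (fun i => hd i)⟩

lemma exists_eps_psd {m : ℕ} {M P : Matrix (Fin m) (Fin m) ℝ}
    (hM : M.PosSemidef) (hP : P.PosSemidef)
    (hker : ∀ v : Fin m → ℝ, M *ᵥ v = 0 → P *ᵥ v = 0) :
    ∃ ε : ℝ, 0 < ε ∧ (M - ε • P).PosSemidef := by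
  classical
  have hH : M.IsHermitian := hM.1
  set U : Matrix (Fin m) (Fin m) ℝ := (hH.eigenvectorUnitary : Matrix (Fin m) (Fin m) ℝ) with hU
  set d : Fin m → ℝ := hH.eigenvalues with hd
  have hdnn : ∀ i, 0 ≤ d i := fun i => hM.eigenvalues_nonneg i
  have hofReal : (RCLike.ofReal ∘ d : Fin m → ℝ) = d := by
    funext i; simp
  have hUU : U * star U = 1 := mem_unitaryGroup_iff.mp hH.eigenvectorUnitary.2
  have hUU' : star U * U = 1 := mem_unitaryGroup_iff'.mp hH.eigenvectorUnitary.2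
  have hdiag : star U * M * U = diagonal d := by
    rw [← hofReal]
    exact hH.conjStarAlgAut_star_eigenvectorUnitary
  have hspec : M = U * diagonal d * star U := by
    rw [← hofReal]
    exact hH.spectral_theorem
  set P' : Matrix (Fin m) (Fin m) ℝ := star U * P * U with hP'def
  have hP' : P'.PosSemidef := by
    have := hP.conjTranspose_mul_mul_same U
    simpa [Matrix.star_eq_conjTranspose, hP'def] using this
  have hker' : ∀ v : Fin m → ℝ, (diagonal d) *ᵥ v = 0 → P' *ᵥ v = 0 := by
    intro v hv
    have hMUv : M *ᵥ (U *ᵥ v) = 0 := by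
      rw [mulVec_mulVec, hspec, Matrix.mul_assoc, Matrix.mul_assoc]
      rw [hUU', Matrix.mul_one, ← mulVec_mulVec, hv, mulVec_zero]
    have hPUv : P *ᵥ (U *ᵥ v) = 0 := hker _ hMUv
    rw [hP'def, ← mulVec_mulVec, ← mulVec_mulVec, hPUv, mulVec_zero]
  obtain ⟨ε, hεpos, hpsd⟩ := diag_sub_psd d hdnn P' hP' hker'
  refine ⟨ε, hεpos, ?_⟩
  have hconj : U * (diagonal d - ε • P') * star U = M - ε • P := by
    rw [Matrix.mul_sub, Matrix.sub_mul, ← hspec]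
    congr 1
    rw [hP'def, Matrix.mul_smul, Matrix.smul_mul]
    congr 1
    rw [← Matrix.mul_assoc, ← Matrix.mul_assoc, hUU, Matrix.one_mul, Matrix.mul_assoc, hUU,
      Matrix.mul_one]
  rw [← hconj]
  have := hpsd.mul_mul_conjTranspose_same U
  simpa [Matrix.star_eq_conjTranspose] using this

/-- A nonzero matrix `M = Q_l` in the spectrahedral cone
`S = {Σ_i x_i A_i : Σ_i x_i A_i ⪰ 0}` spans an extreme ray (every decomposition
`M = Y + Z` with `Y, Z ∈ S` has `Y, Z` nonnegative multiples of `M`) if and only if `M`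
has maximal kernel: whenever `P ∈ S` satisfies `ker P ⊇ ker M`, `P` is a scalar multiple
of `M`. -/
theorem extreme_ray_iff_maximal_kernel {k m : ℕ}
    (A : Fin k → Matrix (Fin m) (Fin m) ℝ) (hA : ∀ i, (A i).IsSymm)
    (S : Set (Matrix (Fin m) (Fin m) ℝ))
    (hS : S = {M | (∃ x : Fin k → ℝ, M = ∑ i, x i • A i) ∧ M.PosSemidef})
    (M : Matrix (Fin m) (Fin m) ℝ) (hM : M ∈ S) (hM0 : M ≠ 0) :
    (∀ Y ∈ S, ∀ Z ∈ S, M = Y + Z →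
        (∃ r : ℝ, 0 ≤ r ∧ Y = r • M) ∧ (∃ r : ℝ, 0 ≤ r ∧ Z = r • M)) ↔
      (∀ P ∈ S, (∀ v : Fin m → ℝ, M.mulVec v = 0 → P.mulVec v = 0) →
        ∃ r : ℝ, P = r • M) := by
  subst hS
  obtain ⟨⟨x, hx⟩, hMpsd⟩ := hM
  have hstar : ∀ (v : Fin m → ℝ), star v = v := fun v => funext fun i => rfl
  have hposv : ∃ v : Fin m → ℝ, 0 < v ⬝ᵥ M *ᵥ v := by
    by_contra h
    push_neg at h
    apply hM0
    have hz : ∀ v, M *ᵥ v = 0 := by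
      intro v
      have h1 : v ⬝ᵥ M *ᵥ v = 0 := by
        have := hMpsd.dotProduct_mulVec_nonneg v
        rw [hstar] at this
        exact le_antisymm (h v) this
      have := (hMpsd.dotProduct_mulVec_zero_iff v).mp (by rw [hstar]; exact h1)
      exact this
    ext i j
    have := congrFun (hz (Pi.single j 1)) i
    simpa using this
  constructor
  · intro hext P hPmem hker
    obtain ⟨⟨y, hy⟩, hPpsd⟩ := hPmem
    obtain ⟨ε, hεpos, hpsd⟩ := exists_eps_psd hMpsd hPpsd hker
    have hYmem : (M - ε • P) ∈
        {M | (∃ x : Fin k → ℝ, M = ∑ i, x i • A i) ∧ M.PosSemidef} := by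
      refine ⟨⟨fun i => x i - ε * y i, ?_⟩, hpsd⟩
      rw [hx, hy, Finset.smul_sum, ← Finset.sum_sub_distrib]
      exact Finset.sum_congr rfl fun i _ => by rw [smul_smul, ← sub_smul]
    have hZmem : (ε • P) ∈
        {M | (∃ x : Fin k → ℝ, M = ∑ i, x i • A i) ∧ M.PosSemidef} := by
      refine ⟨⟨fun i => ε * y i, ?_⟩, psd_smul' hPpsd hεpos.le⟩
      rw [hy, Finset.smul_sum]
      exact Finset.sum_congr rfl fun i _ => by rw [smul_smul]
    obtain ⟨_, r, hr0, hrZ⟩ := hext _ hYmem _ hZmem (by abel)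
    refine ⟨r / ε, ?_⟩
    have hP : P = ε⁻¹ • (ε • P) := by
      rw [smul_smul, inv_mul_cancel₀ hεpos.ne', one_smul]
    rw [hP, hrZ, smul_smul, div_eq_inv_mul]
  · intro hmax Y hY Z hZ hsum
    have key : ∀ (Y' Z' : Matrix (Fin m) (Fin m) ℝ),
        Y' ∈ {M | (∃ x : Fin k → ℝ, M = ∑ i, x i • A i) ∧ M.PosSemidef} →
        Z' ∈ {M | (∃ x : Fin k → ℝ, M = ∑ i, x i • A i) ∧ M.PosSemidef} →
        M = Y' + Z' → ∃ r : ℝ, 0 ≤ r ∧ Y' = r • M := by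
      intro Y' Z' hY' hZ' hsum'
      obtain ⟨hY'lin, hY'psd⟩ := hY'
      obtain ⟨hZ'lin, hZ'psd⟩ := hZ'
      have hkerY : ∀ v, M *ᵥ v = 0 → Y' *ᵥ v = 0 := by
        intro v hv
        have h1 : v ⬝ᵥ M *ᵥ v = 0 := by rw [hv, dotProduct_zero]
        have h2 : v ⬝ᵥ Y' *ᵥ v + v ⬝ᵥ Z' *ᵥ v = 0 := by
          rw [← dotProduct_add, ← add_mulVec, ← hsum', h1]
        have h3 : (0:ℝ) ≤ v ⬝ᵥ Y' *ᵥ v := by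
          have := hY'psd.dotProduct_mulVec_nonneg v; rwa [hstar] at this
        have h4 : (0:ℝ) ≤ v ⬝ᵥ Z' *ᵥ v := by
          have := hZ'psd.dotProduct_mulVec_nonneg v; rwa [hstar] at this
        have h5 : v ⬝ᵥ Y' *ᵥ v = 0 := by linarith
        exact (hY'psd.dotProduct_mulVec_zero_iff v).mp (by rw [hstar]; exact h5)
      obtain ⟨r, hr⟩ := hmax Y' ⟨hY'lin, hY'psd⟩ hkerY
      refine ⟨r, ?_, hr⟩
      obtain ⟨v, hv⟩ := hposv
      have h6 : (0:ℝ) ≤ v ⬝ᵥ Y' *ᵥ v := by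
        have := hY'psd.dotProduct_mulVec_nonneg v; rwa [hstar] at this
      rw [hr, smul_mulVec, dotProduct_smul, smul_eq_mul] at h6
      nlinarith
    exact ⟨key Y Z hY hZ hsum, key Z Y hZ hY (by rw [hsum, add_comm])⟩
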